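/- Let n ≥ 1 be a natural number and c a real number. Let a_l ∈ ℚ (l ∈ ℕ) be the coefficients of the formal power series e^x · ((e^x − 1)/x)^{n−1} = ∑_{l≥0} a_l x^l, where (e^x − 1)/x denotes the power series ∑_{l≥0} x^l/(l+1)!. Define a sequence (b_m)_{m≥0} of real numbers by b_0 = 1 and, for m ≥ 1, b_m = − ∑_{l=1}^{m} (−c)^l · ((l+n−1)!/(n−1)!) · a_l · b_{m−l}. Then b_m = 0 for every m > n, and for every real number X one has ∑_{j=0}^{n} b_j X^{n−j} = ∏_{i=1}^{n} (X + i c). -/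

import Mathlib

open scoped Classical

/-- The coefficients `a_l ∈ ℚ` of the formal power series
`e^x ((e^x - 1)/x)^(n-1)`, where `(e^x - 1)/x = ∑_{l≥0} x^l/(l+1)!`. -/
noncomputable def aCoeff (n l : ℕ) : ℚ :=
  PowerSeries.coeff (R := ℚ) l
    (PowerSeries.exp ℚ *
      (PowerSeries.mk fun j => (1 : ℚ) / ((j + 1).factorial : ℚ)) ^ (n - 1))

open PowerSeries Finset

lemma XE : (PowerSeries.X : PowerSeries ℚ) * (PowerSeries.mk fun j => (1 : ℚ) / ((j + 1).factorial : ℚ)) = PowerSeries.exp ℚ - 1 := by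
  ext m
  cases m with
  | zero => simp [PowerSeries.coeff_zero_eq_constantCoeff, PowerSeries.coeff_exp]
  | succ m => simp [PowerSeries.coeff_succ_X_mul, PowerSeries.coeff_exp, Nat.factorial]

lemma aCoeff_eq (k l : ℕ) :
    aCoeff (k+1) l = ∑ r ∈ Finset.range (k+1),
      (-1:ℚ)^(r+k) * (k.choose r) * ((r+1:ℕ):ℚ)^(l+k) / ((l+k).factorial : ℚ) := by
  have h1 : aCoeff (k+1) l = PowerSeries.coeff (R := ℚ) (l+k)
      ((PowerSeries.exp ℚ - 1)^k * PowerSeries.exp ℚ) := by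
    rw [aCoeff]
    have : ((PowerSeries.exp ℚ - 1)^k * PowerSeries.exp ℚ)
        = PowerSeries.X ^ k * (PowerSeries.exp ℚ *
          (PowerSeries.mk fun j => (1 : ℚ) / ((j + 1).factorial : ℚ)) ^ k) := by
      rw [← XE, mul_pow]; ring
    rw [this, PowerSeries.coeff_X_pow_mul]
    norm_num
  rw [h1, sub_pow]
  simp only [Finset.sum_mul, map_sum, one_pow, mul_one]
  refine Finset.sum_congr rfl fun r hr => ?_
  have : (-1:ℚ⟦X⟧) ^ (r + k) * PowerSeries.exp ℚ ^ r * ((k.choose r : ℕ):ℚ⟦X⟧) * PowerSeries.exp ℚ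
      = PowerSeries.C (R := ℚ) ((-1:ℚ) ^ (r + k) * (k.choose r : ℚ)) * (PowerSeries.exp ℚ ^ (r+1)) := by
    simp only [map_mul, map_pow, map_neg, map_one, map_natCast, pow_succ]
    ring
  rw [this, PowerSeries.coeff_C_mul, PowerSeries.exp_pow_eq_rescale_exp, PowerSeries.coeff_rescale,
    PowerSeries.coeff_exp]
  push_cast
  ring

noncomputable def wq (k r : ℕ) : ℚ :=
  (-1)^(r+k) * ((r+1:ℕ):ℚ)^k * (k.choose r) / (k.factorial : ℚ)

noncomputable def Gs (i : ℕ) : ℚ⟦X⟧ := PowerSeries.mk fun l => (-(i:ℚ))^l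

lemma Gs_mul (i : ℕ) : (1 + PowerSeries.C (R := ℚ) (i:ℚ) * PowerSeries.X) * Gs i = 1 := by
  ext m
  cases m with
  | zero =>
    simp [Gs, PowerSeries.coeff_zero_eq_constantCoeff, map_add, map_mul]
  | succ m =>
    have : (1 + PowerSeries.C (R := ℚ) (i:ℚ) * PowerSeries.X) * Gs i
        = Gs i + PowerSeries.C (R := ℚ) (i:ℚ) * (PowerSeries.X * Gs i) := by ring
    rw [this, map_add, PowerSeries.coeff_C_mul, PowerSeries.coeff_succ_X_mul]
    simp [Gs, pow_succ, PowerSeries.coeff_one]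
    ring

lemma P1a (N : ℕ) : ∏ r ∈ Finset.range N, ((N:ℚ) - r) = N.factorial := by
  induction N with
  | zero => simp
  | succ n ih =>
    rw [Finset.prod_range_succ']
    have h1 : ∀ i ∈ Finset.range n, (((n:ℕ)+1:ℕ):ℚ) - ((i+1:ℕ):ℚ) = (n:ℚ) - i := by
      intro i _; push_cast; ring
    rw [Finset.prod_congr rfl h1, ih]
    push_cast [Nat.factorial_succ]
    ring

lemma P1b (M : ℕ) : ∏ i ∈ Finset.range M, (-(1:ℚ) - i) = (-1)^M * M.factorial := by
  induction M with
  | zero => simp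
  | succ m ih =>
    rw [Finset.prod_range_succ, ih]
    push_cast [Nat.factorial_succ, pow_succ]
    ring

lemma erase_split (k r0 : ℕ) (h : r0 < k+1) :
    (Finset.range (k+1)).erase r0 = Finset.range r0 ∪ Finset.Ico (r0+1) (k+1) := by
  ext x
  simp only [Finset.mem_erase, Finset.mem_range, Finset.mem_union, Finset.mem_Ico]
  omega

lemma prod_erase_eval (k r0 : ℕ) (h : r0 < k+1) :
    ∏ r ∈ (Finset.range (k+1)).erase r0, ((r0:ℚ) - r) =
      (-1)^(k - r0) * (r0.factorial : ℚ) * ((k - r0).factorial : ℚ) := by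
  rw [erase_split k r0 h, Finset.prod_union]
  · rw [P1a]
    have h2 : ∏ r ∈ Finset.Ico (r0+1) (k+1), ((r0:ℚ) - r)
        = ∏ i ∈ Finset.range (k - r0), (-(1:ℚ) - i) := by
      rw [Finset.prod_Ico_eq_prod_range]
      have : k + 1 - (r0 + 1) = k - r0 := by omega
      rw [this]
      refine Finset.prod_congr rfl fun i _ => ?_
      push_cast; ring
    rw [h2, P1b]
    ring
  · rw [Finset.disjoint_left]
    intro a ha hb
    simp only [Finset.mem_range] at ha
    simp only [Finset.mem_Ico] at hb
    omega

lemma lagrange_id (k : ℕ) :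
    ∑ r ∈ Finset.range (k+1), Polynomial.C (wq k r) *
      ∏ r' ∈ (Finset.range (k+1)).erase r,
        (1 + Polynomial.C ((r'+1:ℕ):ℚ) * Polynomial.X) = 1 := by
  set L : Polynomial ℚ := ∑ r ∈ Finset.range (k+1), Polynomial.C (wq k r) *
      ∏ r' ∈ (Finset.range (k+1)).erase r,
        (1 + Polynomial.C ((r'+1:ℕ):ℚ) * Polynomial.X) with hL
  have hdeg : (L - 1).natDegree ≤ k := by
    refine (Polynomial.natDegree_sub_le _ _).trans ?_
    simp only [Polynomial.natDegree_one, max_le_iff]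
    constructor
    · rw [hL]
      refine Polynomial.natDegree_sum_le_of_forall_le _ _ fun r hr => ?_
      refine (Polynomial.natDegree_mul_le).trans ?_
      simp only [Polynomial.natDegree_C, zero_add]
      refine (Polynomial.natDegree_prod_le _ _).trans ?_
      have : ∀ r' ∈ (Finset.range (k+1)).erase r,
          (1 + Polynomial.C ((r'+1:ℕ):ℚ) * Polynomial.X).natDegree ≤ 1 := by
        intro r' _
        refine (Polynomial.natDegree_add_le _ _).trans ?_
        refine max_le (by simp) ((Polynomial.natDegree_C_mul_le _ _).trans (by simp))
      refine (Finset.sum_le_sum this).trans ?_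
      simp only [Finset.sum_const, smul_eq_mul, mul_one]
      rw [Finset.card_erase_of_mem hr, Finset.card_range]
      omega
    · omega
  have heval : ∀ r0 ∈ Finset.range (k+1),
      (L - 1).eval (-(1:ℚ)/((r0:ℚ)+1)) = 0 := by
    intro r0 hr0
    have hr0' : (r0:ℚ) + 1 ≠ 0 := by positivity
    have hr0k : r0 < k + 1 := Finset.mem_range.mp hr0
    rw [Polynomial.eval_sub, Polynomial.eval_one, sub_eq_zero, hL,
      Polynomial.eval_finset_sum]
    rw [Finset.sum_eq_single r0]
    · rw [Polynomial.eval_mul, Polynomial.eval_C, Polynomial.eval_prod]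
      have hfac : ∀ r' ∈ (Finset.range (k+1)).erase r0,
          (1 + Polynomial.C ((r'+1:ℕ):ℚ) * Polynomial.X).eval (-(1:ℚ)/((r0:ℚ)+1))
            = ((r0:ℚ) - r') / ((r0:ℚ)+1) := by
        intro r' _
        simp only [Polynomial.eval_add, Polynomial.eval_one, Polynomial.eval_mul,
          Polynomial.eval_C, Polynomial.eval_X]
        push_cast
        field_simp
        ring
      rw [Finset.prod_congr rfl hfac, Finset.prod_div_distrib, Finset.prod_const,
        Finset.card_erase_of_mem hr0, Finset.card_range, prod_erase_eval k r0 hr0k]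
      have hch : ((k.choose r0 : ℕ):ℚ) * r0.factorial * (k - r0).factorial
          = (k.factorial : ℚ) := by
        exact_mod_cast congrArg (Nat.cast : ℕ → ℚ)
          (Nat.choose_mul_factorial_mul_factorial (by omega : r0 ≤ k))
      have hsign : (-1:ℚ)^(r0+k) * (-1)^(k-r0) = 1 := by
        rw [← pow_add]
        have : r0 + k + (k - r0) = 2*k := by omega
        rw [this, pow_mul]
        norm_num
      have hkf : (k.factorial : ℚ) ≠ 0 := by exact_mod_cast k.factorial_ne_zero
      rw [wq, Nat.add_sub_cancel, div_mul_div_comm, div_eq_one_iff_eq (by positivity)]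
      push_cast
      calc (-1:ℚ)^(r0+k) * ((r0:ℚ)+1)^k * (k.choose r0 : ℚ) *
            ((-1)^(k-r0) * (r0.factorial:ℚ) * ((k-r0).factorial:ℚ))
          = ((-1:ℚ)^(r0+k) * (-1)^(k-r0)) *
            (((r0:ℚ)+1)^k * ((k.choose r0 : ℚ) * (r0.factorial:ℚ) * ((k-r0).factorial:ℚ))) := by
            ring
        _ = 1 * (((r0:ℚ)+1)^k * (k.factorial:ℚ)) := by rw [hsign, hch]
        _ = (k.factorial:ℚ) * ((r0:ℚ)+1)^k := by ring
    · intro r hr hne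
      rw [Polynomial.eval_mul, Polynomial.eval_prod]
      refine mul_eq_zero_of_right _ ?_
      refine Finset.prod_eq_zero (Finset.mem_erase.mpr ⟨hne.symm, hr0⟩) ?_
      simp only [Polynomial.eval_add, Polynomial.eval_one, Polynomial.eval_mul,
        Polynomial.eval_C, Polynomial.eval_X]
      push_cast
      field_simp
      ring
    · intro h; exact absurd hr0 h
  have hcard : (L-1).natDegree <
      (Finset.image (fun r : ℕ => -(1:ℚ)/((r:ℚ)+1)) (Finset.range (k+1))).card := by
    rw [Finset.card_image_of_injOn]
    · rw [Finset.card_range]; omega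
    · intro x hx y hy hxy
      have hx1 : (x:ℚ) + 1 ≠ 0 := by positivity
      have hy1 : (y:ℚ) + 1 ≠ 0 := by positivity
      field_simp at hxy
      exact_mod_cast (by linarith : (x:ℚ) = y)
  have hz : L - 1 = 0 := by
    refine Polynomial.eq_zero_of_natDegree_lt_card_of_eval_eq_zero' _ _ ?_ hcard
    intro x hx
    obtain ⟨r0, hr0, rfl⟩ := Finset.mem_image.mp hx
    exact heval r0 hr0
  have := sub_eq_zero.mp hz
  exact this

lemma coe_fact (s : Finset ℕ) :
    ((∏ r ∈ s, (1 + Polynomial.C ((r+1:ℕ):ℚ) * Polynomial.X) : Polynomial ℚ) : ℚ⟦X⟧)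
    = ∏ r ∈ s, (1 + PowerSeries.C (R := ℚ) ((r+1:ℕ):ℚ) * PowerSeries.X) := by
  rw [← Polynomial.coeToPowerSeries.ringHom_apply, map_prod]
  refine Finset.prod_congr rfl fun r _ => ?_
  rw [Polynomial.coeToPowerSeries.ringHom_apply]
  rw [Polynomial.coe_add, Polynomial.coe_one, Polynomial.coe_mul, Polynomial.coe_C,
    Polynomial.coe_X]

noncomputable def Useries (k : ℕ) : ℚ⟦X⟧ :=
  PowerSeries.mk fun l =>
    (-1:ℚ)^l * (((l+k).factorial : ℚ) / (k.factorial : ℚ)) * aCoeff (k+1) l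

noncomputable def Dpoly (k : ℕ) : Polynomial ℚ :=
  ∏ r ∈ Finset.range (k+1), (1 + Polynomial.C ((r+1:ℕ):ℚ) * Polynomial.X)

lemma Dpoly_coe (k : ℕ) : ((Dpoly k : Polynomial ℚ) : ℚ⟦X⟧)
    = ∏ r ∈ Finset.range (k+1), (1 + PowerSeries.C (R := ℚ) ((r+1:ℕ):ℚ) * PowerSeries.X) := by
  rw [Dpoly, coe_fact]

lemma U_eq (k : ℕ) :
    Useries k = ∑ r ∈ Finset.range (k+1), PowerSeries.C (R := ℚ) (wq k r) * Gs (r+1) := by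
  ext l
  rw [Useries, PowerSeries.coeff_mk, map_sum, aCoeff_eq, Finset.mul_sum]
  refine Finset.sum_congr rfl fun r hr => ?_
  rw [PowerSeries.coeff_C_mul, Gs, PowerSeries.coeff_mk, wq]
  have h1 : ((l+k).factorial : ℚ) ≠ 0 := by exact_mod_cast (l+k).factorial_ne_zero
  have h2 : ((k).factorial : ℚ) ≠ 0 := by exact_mod_cast (k).factorial_ne_zero
  rw [neg_pow ((r+1:ℕ):ℚ) l, pow_add ((r+1:ℕ):ℚ) l k]
  field_simp

lemma UD (k : ℕ) : Useries k * ((Dpoly k : Polynomial ℚ) : ℚ⟦X⟧) = 1 := by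
  rw [U_eq, Dpoly_coe, Finset.sum_mul]
  have h1 : ∀ r ∈ Finset.range (k+1),
      PowerSeries.C (R := ℚ) (wq k r) * Gs (r+1) *
        (∏ r' ∈ Finset.range (k+1), (1 + PowerSeries.C (R := ℚ) ((r'+1:ℕ):ℚ) * PowerSeries.X))
      = PowerSeries.C (R := ℚ) (wq k r) * ∏ r' ∈ (Finset.range (k+1)).erase r,
          (1 + PowerSeries.C (R := ℚ) ((r'+1:ℕ):ℚ) * PowerSeries.X) := by
    intro r hr
    rw [← Finset.mul_prod_erase _ _ hr]
    have h3 := Gs_mul (r+1)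
    push_cast at h3 ⊢
    calc PowerSeries.C (R := ℚ) (wq k r) * Gs (r+1) *
          ((1 + PowerSeries.C (R := ℚ) ((r:ℚ)+1) * PowerSeries.X) *
            ∏ r' ∈ (Finset.range (k+1)).erase r,
              (1 + PowerSeries.C (R := ℚ) ((r':ℚ)+1) * PowerSeries.X))
        = PowerSeries.C (R := ℚ) (wq k r) *
          (((1 + PowerSeries.C (R := ℚ) ((r:ℚ)+1) * PowerSeries.X) * Gs (r+1)) *
            ∏ r' ∈ (Finset.range (k+1)).erase r,
              (1 + PowerSeries.C (R := ℚ) ((r':ℚ)+1) * PowerSeries.X)) := by ring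
      _ = _ := by rw [h3, one_mul]
  rw [Finset.sum_congr rfl h1]
  have h2 : ∀ r ∈ Finset.range (k+1),
      PowerSeries.C (R := ℚ) (wq k r) * ∏ r' ∈ (Finset.range (k+1)).erase r,
          (1 + PowerSeries.C (R := ℚ) ((r'+1:ℕ):ℚ) * PowerSeries.X)
      = Polynomial.coeToPowerSeries.ringHom (Polynomial.C (wq k r) *
          ∏ r' ∈ (Finset.range (k+1)).erase r,
            (1 + Polynomial.C ((r'+1:ℕ):ℚ) * Polynomial.X)) := by
    intro r hr
    rw [Polynomial.coeToPowerSeries.ringHom_apply, Polynomial.coe_mul, Polynomial.coe_C, coe_fact]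
  rw [Finset.sum_congr rfl h2, ← map_sum, lagrange_id, map_one]

lemma aCoeff_zero (n : ℕ) : aCoeff n 0 = 1 := by
  rw [aCoeff, PowerSeries.coeff_zero_eq_constantCoeff, map_mul, map_pow]
  have h1 : PowerSeries.constantCoeff (R := ℚ)
      (PowerSeries.mk fun j => (1 : ℚ) / ((j + 1).factorial : ℚ)) = 1 := by
    rw [← PowerSeries.coeff_zero_eq_constantCoeff, PowerSeries.coeff_mk]
    norm_num
  rw [h1, PowerSeries.constantCoeff_exp]
  norm_num

lemma Dpoly_natDegree_le (k : ℕ) : (Dpoly k).natDegree ≤ k + 1 := by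
  rw [Dpoly]
  refine (Polynomial.natDegree_prod_le _ _).trans ?_
  have h : ∀ r ∈ Finset.range (k+1),
      (1 + Polynomial.C ((r+1:ℕ):ℚ) * Polynomial.X).natDegree ≤ 1 := by
    intro r _
    refine (Polynomial.natDegree_add_le _ _).trans ?_
    exact max_le (by simp) ((Polynomial.natDegree_C_mul_le _ _).trans (by simp))
  refine (Finset.sum_le_sum h).trans ?_
  simp

lemma Dpoly_coeff_zero (k : ℕ) : (Dpoly k).coeff 0 = 1 := by
  rw [Dpoly, Polynomial.coeff_zero_eq_eval_zero, Polynomial.eval_prod]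
  refine Finset.prod_eq_one fun r _ => ?_
  simp

lemma key (k m : ℕ) (hm : 1 ≤ m) :
    ∑ l ∈ Finset.range (m+1),
      ((-1:ℚ)^l * (((l+k).factorial : ℚ) / (k.factorial : ℚ)) * aCoeff (k+1) l)
        * (Dpoly k).coeff (m - l) = 0 := by
  have h2 := congrArg (PowerSeries.coeff (R := ℚ) m) (UD k)
  rw [PowerSeries.coeff_mul, PowerSeries.coeff_one,
    Finset.Nat.sum_antidiagonal_eq_sum_range_succ_mk] at h2
  simp only [Useries, PowerSeries.coeff_mk, Polynomial.coeff_coe] at h2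
  rw [if_neg (by omega)] at h2
  exact h2

lemma bridge (k : ℕ) (t : ℝ) :
    ∑ j ∈ Finset.range (k+2), (((Dpoly k).coeff j : ℚ) : ℝ) * t^j
      = ∏ r ∈ Finset.range (k+1), (1 + ((r+1:ℕ):ℝ) * t) := by
  have hdeg : ((Dpoly k).map (algebraMap ℚ ℝ)).natDegree < k + 2 :=
    lt_of_le_of_lt (Polynomial.natDegree_map_le.trans (Dpoly_natDegree_le k)) (by omega)
  have h1 := Polynomial.eval_eq_sum_range' hdeg t
  have h2 : ∀ r ∈ Finset.range (k+1),
      Polynomial.eval₂ (algebraMap ℚ ℝ) t (1 + Polynomial.C ((r+1:ℕ):ℚ) * Polynomial.X)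
        = 1 + ((r+1:ℕ):ℝ) * t := by
    intro r _
    rw [Polynomial.eval₂_add, Polynomial.eval₂_one, Polynomial.eval₂_mul,
      Polynomial.eval₂_C, Polynomial.eval₂_X, eq_ratCast]
    norm_num
  have hE : Polynomial.eval t ((Dpoly k).map (algebraMap ℚ ℝ))
      = ∏ r ∈ Finset.range (k+1), (1 + ((r+1:ℕ):ℝ) * t) := by
    rw [Polynomial.eval_map, Dpoly, Polynomial.eval₂_finset_prod]
    exact Finset.prod_congr rfl h2
  rw [← hE, h1]
  refine Finset.sum_congr rfl fun j _ => ?_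
  rw [Polynomial.coeff_map, eq_ratCast]

/-- Lemma 7.2 / Proposition 7.1 (algebraic content): if `b₀ = 1` and
`b_m = -∑_{l=1}^m (-c)^l ((l+n-1)!/(n-1)!) a_l b_{m-l}` for `m ≥ 1`, then `b_m = 0` for
`m > n` and `∑_{j=0}^n b_j X^{n-j} = ∏_{i=1}^n (X + i c)` for every real `X`. -/
theorem stmt_13 (n : ℕ) (hn : 1 ≤ n) (c : ℝ) (b : ℕ → ℝ)
    (hb0 : b 0 = 1)
    (hrec : ∀ m : ℕ, 1 ≤ m →
      b m = -∑ l ∈ Finset.Icc 1 m,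
        (-c) ^ l * (((l + n - 1).factorial : ℝ) / ((n - 1).factorial : ℝ)) *
          (aCoeff n l : ℝ) * b (m - l)) :
    (∀ m : ℕ, n < m → b m = 0) ∧
      ∀ X : ℝ, ∑ j ∈ Finset.range (n + 1), b j * X ^ (n - j) =
        ∏ i ∈ Finset.Icc 1 n, (X + (i : ℝ) * c) := by
  obtain ⟨k, rfl⟩ : ∃ k, n = k + 1 := ⟨n - 1, by omega⟩
  have hkf : ((k.factorial : ℕ) : ℝ) ≠ 0 := by
    exact_mod_cast k.factorial_ne_zero
  -- the main induction
  have hbq : ∀ m : ℕ, b m = c ^ m * (((Dpoly k).coeff m : ℚ) : ℝ) := by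
    intro m
    induction m using Nat.strong_induction_on with
    | _ m ih =>
      rcases Nat.eq_zero_or_pos m with hm | hm
      · subst hm
        simp [hb0, Dpoly_coeff_zero]
      · have hkeyR := congrArg (fun q : ℚ => (q : ℝ)) (key k m hm)
        push_cast at hkeyR
        rw [Finset.range_eq_Ico, Finset.sum_eq_sum_Ico_succ_bot (by omega),
          Finset.Ico_add_one_right_eq_Icc] at hkeyR
        simp only [pow_zero, one_mul, zero_add, Nat.sub_zero, aCoeff_zero,
          Rat.cast_one, mul_one] at hkeyR
        rw [div_self hkf, one_mul] at hkeyR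
        have h0 : (((Dpoly k).coeff m : ℚ) : ℝ)
            = -∑ l ∈ Finset.Icc 1 m,
              ((-1:ℝ)^l * ((((l+k).factorial : ℕ) : ℝ) / ((k.factorial : ℕ) : ℝ)) *
                ((aCoeff (k+1) l : ℚ) : ℝ) * (((Dpoly k).coeff (m-l) : ℚ) : ℝ)) := by
          linarith [hkeyR]
        rw [hrec m hm]
        have hterm : ∀ l ∈ Finset.Icc 1 m,
            (-c) ^ l * (((l + (k+1) - 1).factorial : ℝ) / (((k+1) - 1).factorial : ℝ)) *
              ((aCoeff (k+1) l : ℚ) : ℝ) * b (m - l)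
            = c ^ m * ((-1:ℝ)^l * ((((l+k).factorial : ℕ) : ℝ) / ((k.factorial : ℕ) : ℝ)) *
                ((aCoeff (k+1) l : ℚ) : ℝ) * (((Dpoly k).coeff (m-l) : ℚ) : ℝ)) := by
          intro l hl
          obtain ⟨hl1, hl2⟩ := Finset.mem_Icc.mp hl
          have e1 : l + (k+1) - 1 = l + k := by omega
          have e2 : (k+1) - 1 = k := by omega
          rw [e1, e2, ih (m - l) (by omega), neg_pow]
          have e4 : c ^ l * c ^ (m - l) = c ^ m := by
            rw [← pow_add]
            congr 1
            omega
          field_simp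
          linear_combination (
            ((aCoeff (k+1) l : ℚ) : ℝ) * (((Dpoly k).coeff (m-l) : ℚ) : ℝ)) * e4
        rw [Finset.sum_congr rfl hterm, ← Finset.mul_sum, h0]
        ring
  constructor
  · intro m hm
    rw [hbq m, Polynomial.coeff_eq_zero_of_natDegree_lt
      (lt_of_le_of_lt (Dpoly_natDegree_le k) hm)]
    simp
  · intro X
    set p1 : Polynomial ℝ := ∑ j ∈ Finset.range (k+2),
      Polynomial.C ((((Dpoly k).coeff j : ℚ) : ℝ) * c^j) * Polynomial.X^(k+1-j) with hp1
    set p2 : Polynomial ℝ := ∏ i ∈ Finset.Icc 1 (k+1),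
      (Polynomial.X + Polynomial.C ((i:ℝ)*c)) with hp2
    have heval1 : ∀ x : ℝ, Polynomial.eval x p1
        = ∑ j ∈ Finset.range (k+2), (((Dpoly k).coeff j : ℚ) : ℝ) * c^j * x^(k+1-j) := by
      intro x
      rw [hp1, Polynomial.eval_finset_sum]
      refine Finset.sum_congr rfl fun j _ => ?_
      simp
    have heval2 : ∀ x : ℝ, Polynomial.eval x p2
        = ∏ i ∈ Finset.Icc 1 (k+1), (x + (i:ℝ)*c) := by
      intro x
      rw [hp2, Polynomial.eval_prod]
      refine Finset.prod_congr rfl fun i _ => ?_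
      simp
    have hprodr : ∀ x : ℝ, (∏ i ∈ Finset.Icc 1 (k+1), (x + (i:ℝ)*c))
        = ∏ r ∈ Finset.range (k+1), (x + ((r+1:ℕ):ℝ)*c) := by
      intro x
      rw [← Finset.Ico_add_one_right_eq_Icc, Finset.prod_Ico_eq_prod_range]
      have : k + 1 + 1 - 1 = k + 1 := by omega
      rw [this]
      refine Finset.prod_congr rfl fun r _ => ?_
      push_cast
      ring
    have hp12 : p1 = p2 := by
      apply Polynomial.eq_of_infinite_eval_eq
      apply Set.Infinite.mono _ ((Set.finite_singleton (0:ℝ)).infinite_compl)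
      intro x hx
      simp only [Set.mem_compl_iff, Set.mem_singleton_iff] at hx
      simp only [Set.mem_setOf_eq]
      rw [heval1, heval2, hprodr]
      have hfac : ∀ r ∈ Finset.range (k+1),
          (x + ((r+1:ℕ):ℝ)*c) = x * (1 + ((r+1:ℕ):ℝ) * (c/x)) := by
        intro r _
        field_simp
      rw [Finset.prod_congr rfl hfac, Finset.prod_mul_distrib, Finset.prod_const,
        Finset.card_range, ← bridge k (c/x), Finset.mul_sum]
      refine Finset.sum_congr rfl fun j hj => ?_
      have hj2 : j ≤ k + 1 := by
        have := Finset.mem_range.mp hj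
        omega
      rw [div_pow, pow_sub₀ x hx hj2]
      field_simp
    calc ∑ j ∈ Finset.range (k+1+1), b j * X ^ (k+1-j)
        = Polynomial.eval X p1 := by
          rw [heval1]
          refine Finset.sum_congr rfl fun j _ => ?_
          rw [hbq j]
          ring
      _ = Polynomial.eval X p2 := by rw [hp12]
      _ = ∏ i ∈ Finset.Icc 1 (k+1), (X + (i:ℝ)*c) := heval2 X
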